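/- Sum-rate gap between power splitting and time switching: define g(x) = log(1 + λx) − λ·log(1 + x) for fixed λ ∈ (0,1). Then g(0) = 0, g is nonnegative on [0, ∞), g is strictly positive on (0, ∞), and g(x)/log(1+x) → (1 − λ) as x → ∞; i.e., at high SNR the power-splitting rate approaches the full (ideal-receiver) rate minus the constant (1/2)·log(1/λ) while the time-switching rate is only a λ fraction of it. -/

import Mathlib

open Filter

/-- The sum-rate gap `g(x) = log(1+λx) − λ·log(1+x)` for a fixed
`λ ∈ (0,1)` vanishes at `0`, is nonnegative on `[0,∞)`, strictly positive on
`(0,∞)`, and satisfies `g(x)/log(1+x) → 1 − λ` as `x → ∞`. -/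
theorem power_split_time_switch_gap
    (l : ℝ) (hl0 : 0 < l) (hl1 : l < 1) :
    (Real.log (1 + l * 0) - l * Real.log (1 + 0) = 0) ∧
    (∀ x : ℝ, 0 ≤ x → 0 ≤ Real.log (1 + l * x) - l * Real.log (1 + x)) ∧
    (∀ x : ℝ, 0 < x → 0 < Real.log (1 + l * x) - l * Real.log (1 + x)) ∧
    Tendsto (fun x : ℝ =>
        (Real.log (1 + l * x) - l * Real.log (1 + x)) / Real.log (1 + x))
      atTop (nhds (1 - l)) := by
  have key : ∀ x : ℝ, 0 < x → 0 < Real.log (1 + l * x) - l * Real.log (1 + x) := by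
    intro x hx
    have h1x : (0:ℝ) < 1 + x := by linarith
    have hpow : (1 + x) ^ l < 1 + l * x :=
      rpow_one_add_lt_one_add_mul_self (by linarith) (ne_of_gt hx) hl0 hl1
    have hlog : Real.log ((1 + x) ^ l) < Real.log (1 + l * x) :=
      Real.log_lt_log (Real.rpow_pos_of_pos h1x l) hpow
    rw [Real.log_rpow h1x] at hlog
    linarith
  refine ⟨by simp, ?_, key, ?_⟩
  · intro x hx
    rcases eq_or_lt_of_le hx with h | h
    · simp [← h]
    · exact (key x h).le
  · have hEq : ∀ᶠ x : ℝ in atTop,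
        (Real.log (1 + l * x) - l * Real.log (1 + x)) / Real.log (1 + x)
          = Real.log ((1 + l * x) / (1 + x)) / Real.log (1 + x) + (1 - l) := by
      filter_upwards [eventually_gt_atTop (0:ℝ)] with x hx
      have h1x : (0:ℝ) < 1 + x := by linarith
      have h1lx : (0:ℝ) < 1 + l * x := by nlinarith
      have hlogpos : 0 < Real.log (1 + x) := Real.log_pos (by linarith)
      rw [Real.log_div (ne_of_gt h1lx) (ne_of_gt h1x)]
      field_simp
      ring
    rw [tendsto_congr' hEq]
    have hratio : Tendsto (fun x : ℝ => (1 + l * x) / (1 + x)) atTop (nhds l) := by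
      have h := Tendsto.div
        (f := fun x : ℝ => 1 / x + l) (g := fun x : ℝ => 1 / x + 1)
        (((tendsto_const_nhds (x := (1:ℝ))).div_atTop tendsto_id).add tendsto_const_nhds)
        (((tendsto_const_nhds (x := (1:ℝ))).div_atTop tendsto_id).add tendsto_const_nhds)
        (by norm_num)
      simp only [zero_add, div_one] at h
      refine h.congr' ?_
      filter_upwards [eventually_gt_atTop (0:ℝ)] with x hx
      have hx' : x ≠ 0 := ne_of_gt hx
      simp only [Pi.div_apply]
      field_simp
    have hnum : Tendsto (fun x : ℝ => Real.log ((1 + l * x) / (1 + x))) atTop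
        (nhds (Real.log l)) :=
      ((Real.continuousAt_log (ne_of_gt hl0)).tendsto).comp hratio
    have hden : Tendsto (fun x : ℝ => Real.log (1 + x)) atTop atTop := by
      have := Real.tendsto_log_atTop.comp (tendsto_atTop_add_const_left atTop 1 tendsto_id)
      exact this
    have h0 : Tendsto (fun x : ℝ => Real.log ((1 + l * x) / (1 + x)) / Real.log (1 + x))
        atTop (nhds 0) := hnum.div_atTop hden
    have := h0.add (tendsto_const_nhds (x := (1 - l)))
    simpa using this
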